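/- Let G be a finite group and H ≤ G a subgroup with normalizer N = N_G(H). Let X be an N-set on which H acts trivially. Then the H-fixed points of the induced G-set G ×_N X are in natural bijection with X. -/

import Mathlib

/-- The relation on `G × X` generating the induced `G`-set `G ×_N X`:
`(g * n, x)` is identified with `(g, n • x)` for `n ∈ N`. -/
def InducedRel (G : Type*) [Group G] (N : Subgroup G) (X : Type*) [MulAction N X] :
    (G × X) → (G × X) → Prop :=
  fun a b => ∃ n : N, a.1 = b.1 * n ∧ b.2 = n • a.2

/-- The induced `G`-set `G ×_N X`. -/
def InducedSet (G : Type*) [Group G] (N : Subgroup G) (X : Type*) [MulAction N X] : Type _ :=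
  Quot (InducedRel G N X)

/-- The `G`-action on `G ×_N X`, by left multiplication on the first factor. -/
def inducedSmul (G : Type*) [Group G] (N : Subgroup G) (X : Type*) [MulAction N X]
    (g : G) : InducedSet G N X → InducedSet G N X :=
  Quot.map (fun p => (g * p.1, p.2)) (by
    rintro a b ⟨n, h1, h2⟩
    exact ⟨n, by show g * a.1 = g * b.1 * (n : G); rw [h1, mul_assoc], h2⟩)

lemma inducedRel_equivalence (G : Type*) [Group G] (N : Subgroup G) (X : Type*)
    [MulAction N X] : Equivalence (InducedRel G N X) := by
  constructor
  · intro a; exact ⟨1, by simp, by simp⟩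
  · rintro a b ⟨n, h1, h2⟩
    refine ⟨n⁻¹, ?_, ?_⟩
    · rw [h1, mul_assoc]; simp
    · rw [h2, inv_smul_smul]
  · rintro a b c ⟨n, h1, h2⟩ ⟨m, h3, h4⟩
    refine ⟨m * n, ?_, ?_⟩
    · rw [h1, h3]; push_cast; group
    · rw [h4, h2, mul_smul]

lemma inducedRel_mk_eq {G : Type*} [Group G] {N : Subgroup G} {X : Type*}
    [MulAction N X] {a b : G × X}
    (h : Quot.mk (InducedRel G N X) a = Quot.mk (InducedRel G N X) b) :
    InducedRel G N X a b :=
  (inducedRel_equivalence G N X).eqvGen_iff.mp (Quot.eqvGen_exact h)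

/-- Let `G` be a finite group, `H ≤ G`, `N = N_G(H)` its normalizer, and `X` an `N`-set
on which `H` acts trivially and `N/H` acts freely.  Then the map `X → (G ×_N X)^H`,
`x ↦ [e, x]`, is a bijection onto the `H`-fixed points of the induced `G`-set. -/
theorem inducedSet_fixedPoints_equiv (G : Type*) [Group G] [Finite G] (H : Subgroup G)
    (X : Type*) [MulAction (Subgroup.normalizer (H : Set G)) X]
    (htriv : ∀ n : Subgroup.normalizer (H : Set G), (n : G) ∈ H → ∀ x : X, n • x = x)
    (hfree : ∀ (n : Subgroup.normalizer (H : Set G)) (x : X), n • x = x → (n : G) ∈ H) :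
    ∃ e : X ≃ {q : InducedSet G (Subgroup.normalizer (H : Set G)) X //
        ∀ h : G, h ∈ H → inducedSmul G (Subgroup.normalizer (H : Set G)) X h q = q},
      ∀ x : X, (e x : InducedSet G (Subgroup.normalizer (H : Set G)) X) = Quot.mk _ (1, x) := by
  have fixed : ∀ x : X, ∀ h : G, h ∈ H →
      inducedSmul G (Subgroup.normalizer (H : Set G)) X h (Quot.mk _ (1, x)) = Quot.mk _ (1, x) := by
    intro x h hh
    refine Quot.sound ⟨⟨h, H.le_normalizer hh⟩, by simp, (htriv _ hh x).symm⟩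
  set f : X → {q : InducedSet G (Subgroup.normalizer (H : Set G)) X //
      ∀ h : G, h ∈ H → inducedSmul G (Subgroup.normalizer (H : Set G)) X h q = q} :=
    fun x => ⟨Quot.mk _ (1, x), fixed x⟩ with hf
  have hbij : Function.Bijective f := by
    constructor
    · intro x y hxy
      have := inducedRel_mk_eq (congrArg Subtype.val hxy)
      obtain ⟨n, h1, h2⟩ := this
      have hn1 : (n : G) = 1 := by simpa using h1.symm
      have : n = (1 : (Subgroup.normalizer (H : Set G))) := Subtype.ext hn1
      have h2' : y = n • x := h2
      rw [h2', this, one_smul]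
    · rintro ⟨q, hq⟩
      obtain ⟨⟨g, x⟩, rfl⟩ := q.exists_rep
      -- from fixedness, g⁻¹ h g ∈ H for all h ∈ H, and it fixes x
      have key : ∀ h : G, h ∈ H → ∃ n : (Subgroup.normalizer (H : Set G)), h * g = g * n ∧ x = n • x := by
        intro h hh
        have := inducedRel_mk_eq (hq h hh)
        obtain ⟨n, h1, h2⟩ := this
        exact ⟨n, h1, h2⟩
      have hgN : g ∈ (Subgroup.normalizer (H : Set G)) := by
        have hconj : ∀ h : G, h ∈ H → g⁻¹ * h * g ∈ H := by
          intro h hh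
          obtain ⟨n, h1, h2⟩ := key h hh
          have : g⁻¹ * h * g = (n : G) := by
            rw [mul_assoc, h1]; group
          rw [this]
          exact hfree n x h2.symm
        -- conjugation by g maps H into H; finiteness forces equality
        set φ : H → H := fun h => ⟨g⁻¹ * (h : G) * g, hconj _ h.2⟩ with hφ
        have hinj : Function.Injective φ := by
          intro a b hab
          have : g⁻¹ * (a : G) * g = g⁻¹ * (b : G) * g := congrArg Subtype.val hab
          ext
          exact mul_right_cancel (mul_left_cancel ((mul_assoc _ _ _).symm.trans (this.trans (mul_assoc _ _ _))))
        have hsurj : Function.Surjective φ := Finite.surjective_of_injective hinj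
        rw [Subgroup.mem_normalizer_iff]
        intro h
        constructor
        · intro hh
          obtain ⟨⟨h', hh'⟩, hphi⟩ := hsurj ⟨h, hh⟩
          have : g⁻¹ * h' * g = h := congrArg Subtype.val hphi
          have : h' = g * h * g⁻¹ := by rw [← this]; group
          rw [← this]; exact hh'
        · intro hh
          have := hconj _ hh
          have h2 : g⁻¹ * (g * h * g⁻¹) * g = h := by group
          rwa [h2] at this
      refine ⟨(⟨g, hgN⟩ : (Subgroup.normalizer (H : Set G))) • x, ?_⟩
      apply Subtype.ext
      show Quot.mk _ ((1 : G), (⟨g, hgN⟩ : (Subgroup.normalizer (H : Set G))) • x) = Quot.mk _ (g, x)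
      exact (Quot.sound ⟨⟨g, hgN⟩, by simp, rfl⟩).symm
  exact ⟨Equiv.ofBijective f hbij, fun x => rfl⟩
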